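/- Uniqueness of the auxiliary root in the structured WPM: with W = Σ + UUᵀ positive definite, Σ diagonal positive definite, U ∈ ℝ^{N×r}, and g proper closed convex, the map φ(β) = Uᵀ(x − prox_g^Σ(x − Σ^{-1}Uβ)) + β has at most one zero β* ∈ ℝ^r. -/

import Mathlib

open Matrix

/-- The squared `W`-norm: `‖v‖²_W = vᵀ W v`. -/
noncomputable def wnormSq {N : ℕ} (W : Matrix (Fin N) (Fin N) ℝ) (v : Fin N → ℝ) : ℝ :=
  v ⬝ᵥ (W *ᵥ v)

/-- `p` is a weighted proximal point of `x`, i.e. a minimizer of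
`u ↦ g u + (1/2)‖u − x‖²_W`. -/
def IsWProx {N : ℕ} (g : (Fin N → ℝ) → ℝ) (W : Matrix (Fin N) (Fin N) ℝ)
    (x p : Fin N → ℝ) : Prop :=
  ∀ u, g p + (1 / 2) * wnormSq W (p - x) ≤ g u + (1 / 2) * wnormSq W (u - x)

lemma wnormSq_nonneg {N : ℕ} {S : Matrix (Fin N) (Fin N) ℝ} (hS : S.PosSemidef)
    (v : Fin N → ℝ) : 0 ≤ wnormSq S v := by
  have := hS.re_dotProduct_nonneg v
  simpa [wnormSq, dotProduct] using this

lemma wnormSq_expand {N : ℕ} {S : Matrix (Fin N) (Fin N) ℝ} (hsym : Sᵀ = S)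
    (a b : Fin N → ℝ) (t : ℝ) :
    wnormSq S (a + t • b) =
      wnormSq S a + 2 * t * (b ⬝ᵥ (S *ᵥ a)) + t ^ 2 * wnormSq S b := by
  have hba : b ⬝ᵥ (S *ᵥ a) = a ⬝ᵥ (S *ᵥ b) := by
    rw [Matrix.dotProduct_mulVec, ← Matrix.mulVec_transpose, hsym, dotProduct_comm]
  simp only [wnormSq, Matrix.mulVec_add, Matrix.mulVec_smul, dotProduct_add,
    add_dotProduct, dotProduct_smul, smul_dotProduct, smul_eq_mul]
  rw [hba]; ring

/-- Variational inequality for the weighted proximal point. -/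
lemma wprox_vi {N : ℕ} {g : (Fin N → ℝ) → ℝ} (hg : ConvexOn ℝ Set.univ g)
    {S : Matrix (Fin N) (Fin N) ℝ} (hS : S.PosDef) {y p : Fin N → ℝ}
    (hp : IsWProx g S y p) (u : Fin N → ℝ) :
    0 ≤ g u - g p + (u - p) ⬝ᵥ (S *ᵥ (p - y)) := by
  have hsym : Sᵀ = S := hS.isHermitian.eq
  set A : ℝ := g u - g p + (u - p) ⬝ᵥ (S *ᵥ (p - y)) with hA
  set B : ℝ := (1 / 2) * wnormSq S (u - p) with hB
  have hBnn : 0 ≤ B := by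
    have := wnormSq_nonneg hS.posSemidef (u - p); positivity
  have key : ∀ t : ℝ, 0 < t → t ≤ 1 → 0 ≤ A + t * B := by
    intro t ht0 ht1
    have h1 := hp (p + t • (u - p))
    have hconv : g (p + t • (u - p)) ≤ (1 - t) * g p + t * g u := by
      have := hg.2 (Set.mem_univ p) (Set.mem_univ u) (by linarith : (0:ℝ) ≤ 1 - t)
        (le_of_lt ht0) (by ring)
      simpa [smul_eq_mul, sub_smul, one_smul] using
        (le_of_eq (congrArg g (by module :
          p + t • (u - p) = (1 - t) • p + t • u))).trans this
    have hq : wnormSq S (p + t • (u - p) - y) =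
        wnormSq S (p - y) + 2 * t * ((u - p) ⬝ᵥ (S *ᵥ (p - y))) +
          t ^ 2 * wnormSq S (u - p) := by
      have : p + t • (u - p) - y = (p - y) + t • (u - p) := by module
      rw [this, wnormSq_expand hsym]
    have h2 : g p + (1 / 2) * wnormSq S (p - y) ≤
        (1 - t) * g p + t * g u + (1 / 2) * (wnormSq S (p - y) +
          2 * t * ((u - p) ⬝ᵥ (S *ᵥ (p - y))) + t ^ 2 * wnormSq S (u - p)) := by
      calc g p + (1 / 2) * wnormSq S (p - y)
          ≤ g (p + t • (u - p)) + (1 / 2) * wnormSq S (p + t • (u - p) - y) := h1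
        _ ≤ _ := by rw [hq]; linarith
    have h3 : 0 ≤ t * A + t ^ 2 * B := by
      simp only [hA, hB]; nlinarith [h2]
    have : 0 ≤ t * (A + t * B) := by nlinarith
    exact nonneg_of_mul_nonneg_right this ht0
  by_contra hAneg
  push_neg at hAneg
  rcases eq_or_lt_of_le hBnn with hB0 | hBpos
  · have := key 1 one_pos le_rfl; rw [← hB0] at this; linarith
  · set t : ℝ := min 1 (-A / (2 * B)) with htdef
    have htpos : 0 < t := lt_min one_pos (div_pos (by linarith) (by linarith))
    have hle : t ≤ -A / (2 * B) := min_le_right _ _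
    have := key t htpos (min_le_left _ _)
    have htB : t * B ≤ (-A / (2 * B)) * B := by nlinarith
    have heq : (-A / (2 * B)) * B = -A / 2 := by field_simp
    nlinarith [key t htpos (min_le_left _ _)]

/-- Uniqueness of the auxiliary root: the map
`φ(β) = Uᵀ(x − prox_g^Σ(x − Σ⁻¹Uβ)) + β` has at most one zero. -/
theorem stmt7 {N r : ℕ} (g : (Fin N → ℝ) → ℝ)
    (hg : ConvexOn ℝ Set.univ g) (hlsc : LowerSemicontinuous g)
    (S : Matrix (Fin N) (Fin N) ℝ) (hSd : S.IsDiag) (hS : S.PosDef)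
    (U : Matrix (Fin N) (Fin r) ℝ) (hW : (S + U * Uᵀ).PosDef)
    (Pr : (Fin N → ℝ) → (Fin N → ℝ)) (hPr : ∀ y, IsWProx g S y (Pr y))
    (x : Fin N → ℝ) :
    ∀ β₁ β₂ : Fin r → ℝ,
      Uᵀ *ᵥ (x - Pr (x - S⁻¹ *ᵥ (U *ᵥ β₁))) + β₁ = 0 →
      Uᵀ *ᵥ (x - Pr (x - S⁻¹ *ᵥ (U *ᵥ β₂))) + β₂ = 0 →
      β₁ = β₂ := by
  intro β₁ β₂ h₁ h₂
  set y₁ := x - S⁻¹ *ᵥ (U *ᵥ β₁) with hy₁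
  set y₂ := x - S⁻¹ *ᵥ (U *ᵥ β₂) with hy₂
  set p₁ := Pr y₁
  set p₂ := Pr y₂
  set d := β₁ - β₂ with hd
  set q := p₁ - p₂ with hq
  -- Uᵀ q = d
  have hUq : Uᵀ *ᵥ q = d := by
    have e1 : Uᵀ *ᵥ (x - p₁) = -β₁ := by
      have := h₁; rw [add_eq_zero_iff_eq_neg] at this; exact this
    have e2 : Uᵀ *ᵥ (x - p₂) = -β₂ := by
      have := h₂; rw [add_eq_zero_iff_eq_neg] at this; exact this
    have : Uᵀ *ᵥ q = Uᵀ *ᵥ (x - p₂) - Uᵀ *ᵥ (x - p₁) := by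
      rw [← Matrix.mulVec_sub]; congr 1; simp [hq]
    rw [this, e1, e2, hd]; abel
  -- monotonicity from two VIs
  have v1 := wprox_vi hg hS (hPr y₁) p₂
  have v2 := wprox_vi hg hS (hPr y₂) p₁
  -- sum: 0 ≤ (p₂-p₁)⬝S(p₁-y₁) + (p₁-p₂)⬝S(p₂-y₂)
  have hsum : 0 ≤ (p₂ - p₁) ⬝ᵥ (S *ᵥ (p₁ - y₁)) + (p₁ - p₂) ⬝ᵥ (S *ᵥ (p₂ - y₂)) := by
    dsimp only [p₁, p₂] at v1 v2 ⊢; linarith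
  have hexp : (p₂ - p₁) ⬝ᵥ (S *ᵥ (p₁ - y₁)) + (p₁ - p₂) ⬝ᵥ (S *ᵥ (p₂ - y₂)) =
      q ⬝ᵥ (S *ᵥ (y₁ - y₂)) - q ⬝ᵥ (S *ᵥ q) := by
    have : p₂ - p₁ = -q := by simp [hq]
    rw [this]
    have h12 : p₁ - y₁ = q + (p₂ - y₁) := by simp [hq]
    have hy12 : y₁ - y₂ = (p₁ - y₂) - (p₁ - y₁) := by abel
    simp only [neg_dotProduct, Matrix.mulVec_sub, Matrix.mulVec_add,
      dotProduct_sub, dotProduct_add, hq]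
    ring
  rw [hexp] at hsum
  -- q ⬝ S (y₁ - y₂) = - d ⬝ d
  have hSinv : S * S⁻¹ = 1 := Matrix.mul_nonsing_inv S (isUnit_iff_ne_zero.mpr hS.det_pos.ne')
  have hy12 : y₁ - y₂ = -(S⁻¹ *ᵥ (U *ᵥ d)) := by
    rw [hy₁, hy₂, hd, Matrix.mulVec_sub, Matrix.mulVec_sub]
    abel
  have hkey : q ⬝ᵥ (S *ᵥ (y₁ - y₂)) = -(d ⬝ᵥ d) := by
    rw [hy12, Matrix.mulVec_neg, dotProduct_neg, Matrix.mulVec_mulVec, hSinv,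
      Matrix.one_mulVec, Matrix.dotProduct_mulVec, ← Matrix.mulVec_transpose, hUq,
      dotProduct_comm]
  rw [hkey] at hsum
  have hqSq : 0 ≤ q ⬝ᵥ (S *ᵥ q) := wnormSq_nonneg hS.posSemidef q
  have hdd : 0 ≤ d ⬝ᵥ d := by
    simpa [dotProduct] using Finset.sum_nonneg fun i _ => mul_self_nonneg (d i)
  have : d ⬝ᵥ d = 0 := le_antisymm (by linarith) hdd
  have hd0 : d = 0 := dotProduct_self_eq_zero.mp this
  have := sub_eq_zero.mp (hd ▸ hd0)
  exact this
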